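/- Let z₁, z₂ ∈ ℂ* with |z₁ + z₂| > 2·|z₁·z₂|. Then the polynomial P'(u) = 4·conj(z₁·z₂)·u³ - 3·(conj(z₁)+conj(z₂))·u² + (z₁+z₂) has exactly two roots (counted with multiplicity) in the closed unit disk. -/

import Mathlib

open Complex ComplexConjugate Polynomial

set_option maxHeartbeats 1000000 in
private theorem CI2' (e r y : ℝ) (hy0 : 0 ≤ y) (h3 : r^2 ≤ e) (h4 : e ≤ 1) (hy : y ≤ 1)
    (hN : 1 - e + e^2 + 2*r*(1+e) + 4*r^2 = 9*y^2*e^2)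
    (hc : y*e ≤ 1+2*r+e) :
    4*y^3*e^2 ≤ 1+2*r+e := by
  have he0 : (0:ℝ) ≤ e := le_trans (sq_nonneg r) h3
  have hye0 : 0 ≤ y*e := mul_nonneg hy0 he0
  -- case A : 4 y^2 e ≤ 1
  rcases le_total (4*(y^2)*e) 1 with hA | hA
  · calc 4*y^3*e^2 = (y*e)*(4*y^2*e) := by ring
    _ ≤ (y*e)*1 := by apply mul_le_mul_of_nonneg_left hA hye0
    _ ≤ 1+2*r+e := by linarith
  · -- now 9 e ≤ 4 N
    have h9e : 9*e ≤ 4*(9*y^2*e^2) := by nlinarith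
    have hgoal : 4*(9*y^2*e^2) ≤ 9*(1+2*r+e) → 4*y^3*e^2 ≤ 1+2*r+e := by
      intro hh
      nlinarith [mul_nonneg (mul_nonneg hy0 hy0) (mul_nonneg he0 he0), mul_nonneg (sub_nonneg.2 hy) (mul_nonneg (mul_nonneg hy0 hy0) (mul_nonneg he0 he0))]
    apply hgoal
    have hQ2 : 9*y^2*e^2 ≤ 9*(1+2*r+e)^2 := by nlinarith
    rw [← hN] at h9e hQ2 ⊢
    rcases le_total e (1/2) with hB | hB
    · nlinarith [sq_nonneg (2*r+1), sq_nonneg (e-r), mul_nonneg (sub_nonneg.2 h3) (sub_nonneg.2 h4), mul_nonneg (sub_nonneg.2 h3) (sub_nonneg.2 hB)]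
    · nlinarith [sq_nonneg (2*r+1), sq_nonneg (e-r), mul_nonneg (sub_nonneg.2 h3) (sub_nonneg.2 h4), mul_nonneg (sub_nonneg.2 hB) (sub_nonneg.2 h4), sq_nonneg (r-1), sq_nonneg (e+2*r)]

private theorem CI1' (e r y : ℝ) (hy0 : 0 ≤ y) (h3 : r^2 ≤ e) (hy : 1 ≤ y) (hye : 1 ≤ y*e)
    (hN : 1 - e + e^2 + 2*r*(1+e) + 4*r^2 = 9*y^2*e^2) :
    4*y^3*e^2 ≤ 1+2*r+e := by
  have he0 : (0:ℝ) ≤ e := le_trans (sq_nonneg r) h3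
  set s := Real.sqrt e with hs
  have hs0 : 0 ≤ s := Real.sqrt_nonneg e
  have hs2 : s^2 = e := Real.sq_sqrt he0
  have hrs : r ≤ s := by nlinarith [sq_nonneg (r - s), sq_nonneg (r + s)]
  have hstep : 9*y^2*e^2 ≤ (1 + s + s^2)^2 := by
    nlinarith [mul_nonneg (sub_nonneg.2 hrs) (sq_nonneg s), mul_nonneg (sub_nonneg.2 hrs) hs0]
  have h1s : 0 ≤ 1 + s + s^2 := by positivity
  have hye' : 3*y*e ≤ 1 + s + s^2 := by
    nlinarith [mul_nonneg (mul_nonneg hy0 he0) hy0, sq_nonneg (3*y*e - (1+s+s^2))]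
  have hs1 : s = 1 := by nlinarith [hye', mul_le_mul hy (le_refl e) he0 (le_trans zero_le_one hy)]
  have he1 : e = 1 := by rw [← hs2, hs1]; ring
  have hy1 : y = 1 := by nlinarith
  have hr1 : r = 1 := by nlinarith
  rw [he1, hy1, hr1]; norm_num

private theorem normSq_one_add (d : ℂ) :
    Complex.normSq (1 + d) = 1 + 2*d.re + Complex.normSq d := by
  simp [Complex.normSq_apply, Complex.add_re, Complex.add_im]
  ring

private theorem normSq_one_add_add_sq (d : ℂ) :
    Complex.normSq (1 + d + d^2) =
      1 - Complex.normSq d + (Complex.normSq d)^2 + 2*d.re*(1 + Complex.normSq d) + 4*d.re^2 := by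
  simp [Complex.normSq_apply, Complex.add_re, Complex.add_im, pow_two, Complex.mul_re,
    Complex.mul_im]
  ring

set_option maxHeartbeats 2000000 in
private theorem key (a b c : ℂ) (hF : a*b + b*c + c*a = 0)
    (hE : ‖a+b+c‖ = 3 * ‖a*b*c‖)
    (hm : 1/2 < ‖a*b*c‖)
    (hside : (1 ≤ ‖a‖ ∧ 1 ≤ ‖b‖) ∨
      (‖a‖ ≤ 1 ∧ ‖b‖ ≤ ‖a‖ ∧ ‖c‖ ≤ 1)) : False := by
  have habc : a*b*c ≠ 0 := by
    intro h0
    rw [h0] at hm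
    simp at hm
    linarith
  have ha0 : a ≠ 0 := fun h => habc (by rw [h]; ring)
  have hb0 : b ≠ 0 := fun h => habc (by rw [h]; ring)
  have hc0 : c ≠ 0 := fun h => habc (by rw [h]; ring)
  obtain ⟨d, hbad⟩ : ∃ d, b = a * d := ⟨b / a, by field_simp⟩
  subst hbad
  have hd0 : d ≠ 0 := by
    rintro rfl
    exact hb0 (by ring)
  have hcab : c*(a + a*d) = -(a*(a*d)) := by linear_combination hF
  have hab : a + a*d ≠ 0 := by
    intro hs
    rw [hs, mul_zero] at hcab
    exact mul_ne_zero ha0 hb0 (by linear_combination hcab)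
  have h1d : (1:ℂ) + d ≠ 0 := by
    intro h0
    exact hab (by rw [show a + a*d = a*(1+d) from by ring, h0, mul_zero])
  -- absolute value identities
  have W1 := congrArg (‖·‖)
    (show (a + a*d + c) * (a*(1+d)) = a^2 * (1+d+d^2) from by linear_combination hcab)
  simp only [norm_mul, norm_pow] at W1 hE
  rw [hE] at W1
  have W2 := congrArg (‖·‖)
    (show (a*(a*d)*c) * (a*(1+d)) = -((a^2*d)^2) from by linear_combination (a*(a*d))*hcab)
  simp only [norm_mul, norm_pow, norm_neg] at W2
  have W3 := congrArg (‖·‖)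
    (show c*(a*(1+d)) = -(a*(a*d)) from by linear_combination hcab)
  simp only [map_mul, norm_neg] at W3
  simp only [norm_mul] at hm
  set x := ‖a‖ with hxdef
  set D := ‖d‖ with hDdef
  set B := ‖1 + d‖ with hBdef
  set A := ‖1 + d + d^2‖ with hAdef
  set Cc := ‖c‖ with hCcdef
  have hx0 : 0 < x := norm_pos_iff.mpr ha0
  have hD0 : 0 < D := norm_pos_iff.mpr hd0
  have hB0 : 0 < B := norm_pos_iff.mpr h1d
  have hC0 : 0 < Cc := norm_pos_iff.mpr hc0
  have hxne : x ≠ 0 := ne_of_gt hx0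
  have hA3 : A = 3*x^2*D^2 := by
    apply mul_left_cancel₀ (pow_ne_zero 2 hxne)
    linear_combination -W1 + 3*W2
  have hMB : (x*(x*D)*Cc)*B = x^3*D^2 := by
    apply mul_right_cancel₀ hxne
    linear_combination W2
  have hBlt : B < 2*(x^3*D^2) := by nlinarith [hm, hB0]
  -- real side
  have hr2e : d.re^2 ≤ Complex.normSq d := by
    rw [Complex.normSq_apply]
    nlinarith [sq_nonneg d.im]
  have heD : Complex.normSq d = D^2 := by rw [hDdef, Complex.sq_norm]
  have hQ : B^2 = 1 + 2*d.re + Complex.normSq d := by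
    rw [hBdef, Complex.sq_norm, normSq_one_add]
  have hy0 : (0:ℝ) ≤ x^2 := sq_nonneg x
  have hN : 1 - Complex.normSq d + (Complex.normSq d)^2 + 2*d.re*(1 + Complex.normSq d)
      + 4*d.re^2 = 9*(x^2)^2*(Complex.normSq d)^2 := by
    rw [← normSq_one_add_add_sq, ← Complex.sq_norm, ← hAdef, hA3, heD]
    ring
  have hfinal : 4*(x^2)^3*(Complex.normSq d)^2 ≤ 1 + 2*d.re + Complex.normSq d := by
    rcases hside with ⟨hA1, hB1⟩ | ⟨hA1, hBA, hC1⟩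
    · apply CI1' _ _ _ hy0 hr2e _ _ hN
      · nlinarith
      · rw [norm_mul] at hB1
        rw [heD]
        nlinarith
    · apply CI2' _ _ _ hy0 hr2e _ _ hN _
      · rw [heD]
        rw [norm_mul] at hBA
        have hD1 : D ≤ 1 := by nlinarith
        nlinarith
      · nlinarith
      · have hxDB : x*D ≤ B := by
          nlinarith [W3, mul_nonneg (mul_nonneg (sub_nonneg.2 hC1) hx0.le) hB0.le]
        rw [← hQ, heD]
        nlinarith [mul_nonneg hx0.le hD0.le]
  have hcon : B^2 < 4*(x^2)^3*(Complex.normSq d)^2 := by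
    have h1 : B^2 < (2*(x^3*D^2))^2 := by nlinarith [hBlt, hB0]
    rw [heD]
    nlinarith [h1]
  rw [hQ] at hcon
  linarith

private theorem small_of_big (a b c : ℂ) (hF : a*b + b*c + c*a = 0)
    (hE : ‖a+b+c‖ = 3 * ‖a*b*c‖)
    (hm : 1/2 < ‖a*b*c‖) (ha : 1 < ‖a‖) :
    ‖b‖ ≤ 1 := by
  by_contra hb
  push_neg at hb
  exact key a b c hF hE hm (Or.inl ⟨ha.le, hb.le⟩)

theorem deriv_two_roots_in_closed_disk (z₁ z₂ : ℂ) (hz₁ : z₁ ≠ 0) (hz₂ : z₂ ≠ 0)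
    (h : ‖z₁ + z₂‖ > 2 * ‖z₁ * z₂‖) :
    ((C (4 * conj (z₁ * z₂)) * X ^ 3 - C (3 * (conj z₁ + conj z₂)) * X ^ 2
        + C (z₁ + z₂)).roots.filter (fun u => ‖u‖ ≤ 1)).card = 2 := by
  have hz12 : z₁ * z₂ ≠ 0 := mul_ne_zero hz₁ hz₂
  have hp0 : conj (z₁ * z₂) ≠ 0 := by
    intro h0
    apply hz12
    have := congrArg conj h0
    simpa using this
  have habsp : ‖conj (z₁ * z₂)‖ = ‖z₁ * z₂‖ := Complex.norm_conj _
  have hpabs0 : 0 < ‖conj (z₁ * z₂)‖ := norm_pos_iff.mpr hp0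
  have hwv : (conj z₁ + conj z₂ : ℂ) = conj (z₁ + z₂) := by rw [map_add]
  have habsw : ‖conj z₁ + conj z₂‖ = ‖z₁ + z₂‖ := by
    rw [hwv, Complex.norm_conj]
  -- the cubic
  set Q : Cubic ℂ := ⟨4 * conj (z₁ * z₂), -(3 * (conj z₁ + conj z₂)), 0, z₁ + z₂⟩ with hQ
  have hQa : Q.a ≠ 0 := mul_ne_zero (by norm_num) hp0
  have hpoly : C (4 * conj (z₁ * z₂)) * X ^ 3 - C (3 * (conj z₁ + conj z₂)) * X ^ 2
      + C (z₁ + z₂) = Q.toPoly := by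
    simp only [Cubic.toPoly, hQ, map_neg, Polynomial.C_0, zero_mul, mul_zero, add_zero, zero_add]
    ring
  have hsplit : Splits (Q.toPoly.map (RingHom.id ℂ)) := IsAlgClosed.splits _
  obtain ⟨x, y, z, h3⟩ := (Cubic.splits_iff_roots_eq_three hQa).mp hsplit
  have hb := Cubic.b_eq_three_roots hQa h3
  have hcc := Cubic.c_eq_three_roots hQa h3
  have hdd := Cubic.d_eq_three_roots hQa h3
  simp only [RingHom.id_apply, Cubic.map, hQ] at hb hcc hdd
  -- hb : -(3*(conj z₁ + conj z₂)) = 4*conj(z₁z₂) * -(x+y+z)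
  -- hcc : 0 = 4*conj(z₁z₂) * (x*y + x*z + y*z)
  -- hdd : z₁+z₂ = 4*conj(z₁z₂) * -(x*y*z)
  have hF : x*y + y*z + z*x = 0 := by
    have h4 : (4 : ℂ) * conj (z₁ * z₂) ≠ 0 := mul_ne_zero (by norm_num) hp0
    have := mul_eq_zero.mp hcc.symm
    rcases this with h' | h'
    · exact absurd h' h4
    · linear_combination h'
  have he1 : (3 : ℂ) * (conj z₁ + conj z₂) = 4 * conj (z₁ * z₂) * (x+y+z) := by
    linear_combination -hb
  have habs1 : 3 * ‖conj z₁ + conj z₂‖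
      = 4 * ‖conj (z₁ * z₂)‖ * ‖x+y+z‖ := by
    have := congrArg (‖·‖) he1
    simp only [norm_mul] at this
    simpa [Complex.norm_ofNat] using this
  have habs2 : ‖z₁ + z₂‖
      = 4 * ‖conj (z₁ * z₂)‖ * ‖x*y*z‖ := by
    have := congrArg (‖·‖) hdd
    simp only [map_mul, norm_neg] at this
    simpa [Complex.norm_ofNat] using this
  have hE : ‖x+y+z‖ = 3 * ‖x*y*z‖ := by
    have h12 : 3 * ‖z₁ + z₂‖
        = 4 * ‖conj (z₁ * z₂)‖ * ‖x+y+z‖ := by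
      rw [← habsw]; exact habs1
    rw [habs2] at h12
    have := mul_left_cancel₀ (by positivity : (4:ℝ) * ‖conj (z₁ * z₂)‖ ≠ 0)
      (show 4 * ‖conj (z₁ * z₂)‖ * ‖x+y+z‖
        = 4 * ‖conj (z₁ * z₂)‖ * (3 * ‖x*y*z‖) from by linarith)
    exact this
  have hm : 1/2 < ‖x*y*z‖ := by
    rw [habsp] at habs2
    nlinarith [habs2, h, hpabs0, habsp]
  -- roots of the polynomial
  have hroots : (C (4 * conj (z₁ * z₂)) * X ^ 3 - C (3 * (conj z₁ + conj z₂)) * X ^ 2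
      + C (z₁ + z₂)).roots = {x, y, z} := by
    rw [hpoly]
    have hmapid : Cubic.map (RingHom.id ℂ) Q = Q := by
      simp only [Cubic.map, RingHom.id_apply]
    rw [← hmapid]
    exact h3
  rw [hroots]
  -- one root is big
  have hone : 1 < ‖x‖ ∨ 1 < ‖y‖ ∨ 1 < ‖z‖ := by
    by_contra hcon
    push_neg at hcon
    obtain ⟨hx1, hy1, hz1⟩ := hcon
    rcases le_total (‖y‖) (‖x‖) with hxy | hxy
    · exact key x y z hF hE hm (Or.inr ⟨hx1, hxy, hz1⟩)
    · refine key y x z (by linear_combination hF) ?_ ?_ (Or.inr ⟨hy1, hxy, hz1⟩)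
      · rw [show y+x+z = x+y+z from by ring, show y*x*z = x*y*z from by ring]; exact hE
      · rw [show y*x*z = x*y*z from by ring]; exact hm
  rcases hone with h1 | h1 | h1
  · have hy1 : ‖y‖ ≤ 1 := small_of_big x y z hF hE hm h1
    have hz1 : ‖z‖ ≤ 1 := by
      refine small_of_big x z y (by linear_combination hF) ?_ ?_ h1
      · rw [show x+z+y = x+y+z from by ring, show x*z*y = x*y*z from by ring]; exact hE
      · rw [show x*z*y = x*y*z from by ring]; exact hm
    have hx1 : ¬ (‖x‖ ≤ 1) := not_le.2 h1
    simp [Multiset.filter_cons, Multiset.filter_singleton, hx1, hy1, hz1]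
  · have hx1 : ‖x‖ ≤ 1 := by
      refine small_of_big y x z (by linear_combination hF) ?_ ?_ h1
      · rw [show y+x+z = x+y+z from by ring, show y*x*z = x*y*z from by ring]; exact hE
      · rw [show y*x*z = x*y*z from by ring]; exact hm
    have hz1 : ‖z‖ ≤ 1 := by
      refine small_of_big y z x (by linear_combination hF) ?_ ?_ h1
      · rw [show y+z+x = x+y+z from by ring, show y*z*x = x*y*z from by ring]; exact hE
      · rw [show y*z*x = x*y*z from by ring]; exact hm
    have hy1 : ¬ (‖y‖ ≤ 1) := not_le.2 h1
    simp [Multiset.filter_cons, Multiset.filter_singleton, hx1, hy1, hz1]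
  · have hx1 : ‖x‖ ≤ 1 := by
      refine small_of_big z x y (by linear_combination hF) ?_ ?_ h1
      · rw [show z+x+y = x+y+z from by ring, show z*x*y = x*y*z from by ring]; exact hE
      · rw [show z*x*y = x*y*z from by ring]; exact hm
    have hy1 : ‖y‖ ≤ 1 := by
      refine small_of_big z y x (by linear_combination hF) ?_ ?_ h1
      · rw [show z+y+x = x+y+z from by ring, show z*y*x = x*y*z from by ring]; exact hE
      · rw [show z*y*x = x*y*z from by ring]; exact hm
    have hz1 : ¬ (‖z‖ ≤ 1) := not_le.2 h1
    simp [Multiset.filter_cons, Multiset.filter_singleton, hx1, hy1, hz1]
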